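/- Let n be a nonempty finite type, (Ω, μ) a probability space, and X : Ω → ℕ a measurable random variable such that μ{X ≥ t} > 0 for every t ∈ ℕ. Let A : ℕ → Matrix n n ℝ be a sequence of matrices with ∑_{t=0}^∞ ‖A t‖ < ∞. Define the randomly-stopped estimator Γ : Ω → Matrix n n ℝ by Γ(ω) = ∑_{t=0}^{X ω} (μ{X ≥ t})⁻¹ • A t. Then Γ is Bochner integrable and ∫_Ω Γ dμ = ∑_{t=0}^∞ A t. -/

import Mathlib

open MeasureTheory

attribute [local instance] Matrix.linftyOpNormedRing Matrix.linftyOpNormedAlgebra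

/-- Unbiasedness of the randomly-stopped estimator (heart of Theorem 1 / ∞-SGD). -/
theorem randomly_stopped_estimator_unbiased {n : Type*} [Fintype n] [Nonempty n] [DecidableEq n]
    {Ω : Type*} [MeasurableSpace Ω] (μ : Measure Ω) [IsProbabilityMeasure μ]
    (X : Ω → ℕ) (hX : Measurable X)
    (hpos : ∀ t : ℕ, 0 < μ {ω | t ≤ X ω})
    (A : ℕ → Matrix n n ℝ) (hA : Summable (fun t => ‖A t‖)) :
    @Integrable (Matrix n n ℝ) UniformSpace.toTopologicalSpace SeminormedAddGroup.toContinuousENorm _ _ (fun ω => ∑ t ∈ Finset.range (X ω + 1),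
        ((μ {ω' | t ≤ X ω'}).toReal)⁻¹ • A t) μ ∧
      ∫ ω, (∑ t ∈ Finset.range (X ω + 1), ((μ {ω' | t ≤ X ω'}).toReal)⁻¹ • A t) ∂μ
        = ∑' t : ℕ, A t := by
  letI : ContinuousENorm (Matrix n n ℝ) := SeminormedAddGroup.toContinuousENorm
  haveI : TopologicalSpace.PseudoMetrizableSpace (Matrix n n ℝ) :=
    inferInstanceAs (TopologicalSpace.PseudoMetrizableSpace (n → n → ℝ))
  set p : ℕ → ℝ := fun t => (μ {ω' | t ≤ X ω'}).toReal with hp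
  have hmeas : ∀ t, MeasurableSet {ω' | t ≤ X ω'} := by
    intro t
    have : {ω' | t ≤ X ω'} = X ⁻¹' Set.Ici t := rfl
    rw [this]; exact hX measurableSet_Ici
  have hpne : ∀ t, μ {ω' | t ≤ X ω'} ≠ ⊤ := fun t => measure_ne_top μ _
  have hppos : ∀ t, 0 < p t := fun t => ENNReal.toReal_pos (hpos t).ne' (hpne t)
  set f : ℕ → Ω → Matrix n n ℝ :=
    fun t => Set.indicator {ω' | t ≤ X ω'} (fun _ => (p t)⁻¹ • A t) with hf
  have hmem : ∀ t (ω : Ω), t ≤ X ω → f t ω = (p t)⁻¹ • A t := by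
    intro t ω h
    simp only [hf]
    exact Set.indicator_of_mem (s := {ω' | t ≤ X ω'}) h _
  have hzero : ∀ t (ω : Ω), X ω < t → f t ω = 0 := by
    intro t ω h
    simp only [hf]
    exact Set.indicator_of_notMem (s := {ω' | t ≤ X ω'}) (by simpa using h) _
  have hsm : ∀ t, StronglyMeasurable (f t) :=
    fun t => stronglyMeasurable_const.indicator (hmeas t)
  have hfin : ∀ ω, ∀ t ∉ Finset.range (X ω + 1), f t ω = 0 := by
    intro ω t ht
    exact hzero t ω (Nat.lt_of_add_one_le (not_lt.mp (fun h => ht (Finset.mem_range.mpr h))))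
  have hkey : ∀ ω, (∑ t ∈ Finset.range (X ω + 1), (p t)⁻¹ • A t) = ∑' t, f t ω := by
    intro ω
    rw [tsum_eq_sum (hfin ω)]
    exact Finset.sum_congr rfl fun t ht =>
      (hmem t ω (Nat.lt_add_one_iff.mp (Finset.mem_range.mp ht))).symm
  have hΓsm : StronglyMeasurable
      (fun ω => ∑ t ∈ Finset.range (X ω + 1), (p t)⁻¹ • A t) := by
    refine stronglyMeasurable_of_tendsto (f := fun N ω => ∑ t ∈ Finset.range N, f t ω)
      Filter.atTop (fun N => Finset.stronglyMeasurable_fun_sum _ fun t _ => hsm t) ?_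
    rw [tendsto_pi_nhds]
    intro ω
    refine Filter.Tendsto.congr' ?_ tendsto_const_nhds
    filter_upwards [Filter.eventually_ge_atTop (X ω + 1)] with N hN
    rw [hkey ω, tsum_eq_sum (hfin ω)]
    exact Finset.sum_subset (Finset.range_subset_range.mpr hN)
      (fun t _ ht => hfin ω t ht)
  have hint : ∀ t, Integrable (f t) μ :=
    fun t => (integrable_const ((p t)⁻¹ • A t)).indicator (hmeas t)
  have hintegral : ∀ t, ∫ ω, f t ω ∂μ = A t := by
    intro t
    simp only [hf]
    rw [integral_indicator_const _ (hmeas t), measureReal_def, smul_smul, mul_inv_cancel₀ (hppos t).ne', one_smul]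
  have hc : ∀ t, p t * ‖(p t)⁻¹ • A t‖ = ‖A t‖ := by
    intro t
    rw [norm_smul, Real.norm_eq_abs, abs_of_nonneg (inv_nonneg.mpr (hppos t).le), ← mul_assoc,
      mul_inv_cancel₀ (hppos t).ne', one_mul]
  have hnorm : ∀ t, ∫ ω, ‖f t ω‖ ∂μ = ‖A t‖ := by
    intro t
    have h1 : (fun ω => ‖f t ω‖) =
        Set.indicator {ω' | t ≤ X ω'} (fun _ => ‖(p t)⁻¹ • A t‖) := by
      funext ω
      simp only [hf, Set.indicator_apply]
      split_ifs <;> simp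
    rw [h1, integral_indicator_const _ (hmeas t), measureReal_def, smul_eq_mul, hc t]
  have hsum : Summable fun t => ∫ ω, ‖f t ω‖ ∂μ := by
    simpa only [hnorm] using hA
  constructor
  · -- Integrability
    refine ⟨hΓsm.aestronglyMeasurable, ?_⟩
    have hbd : ∀ ω, (‖∑ t ∈ Finset.range (X ω + 1), (p t)⁻¹ • A t‖₊ : ENNReal)
        ≤ ∑' t, (‖f t ω‖₊ : ENNReal) := by
      intro ω
      calc (‖∑ t ∈ Finset.range (X ω + 1), (p t)⁻¹ • A t‖₊ : ENNReal)
          ≤ ∑ t ∈ Finset.range (X ω + 1), (‖(p t)⁻¹ • A t‖₊ : ENNReal) := by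
            rw [← ENNReal.coe_finset_sum]
            exact_mod_cast nnnorm_sum_le _ _
        _ = ∑ t ∈ Finset.range (X ω + 1), (‖f t ω‖₊ : ENNReal) := by
            refine Finset.sum_congr rfl fun t ht => ?_
            rw [hmem t ω (Nat.lt_add_one_iff.mp (Finset.mem_range.mp ht))]
        _ ≤ ∑' t, (‖f t ω‖₊ : ENNReal) := ENNReal.sum_le_tsum _
    show (∫⁻ ω, (‖∑ t ∈ Finset.range (X ω + 1), (p t)⁻¹ • A t‖₊ : ENNReal) ∂μ) < ⊤
    calc ∫⁻ ω, (‖∑ t ∈ Finset.range (X ω + 1), (p t)⁻¹ • A t‖₊ : ENNReal) ∂μ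
        ≤ ∫⁻ ω, ∑' t, (‖f t ω‖₊ : ENNReal) ∂μ := lintegral_mono hbd
      _ = ∑' t, ∫⁻ ω, (‖f t ω‖₊ : ENNReal) ∂μ :=
          lintegral_tsum fun t => ((hsm t).enorm).aemeasurable
      _ = ∑' t, ENNReal.ofReal ‖A t‖ := by
          refine tsum_congr fun t => ?_
          have h2 : (fun ω => (‖f t ω‖₊ : ENNReal)) =
              Set.indicator {ω' | t ≤ X ω'} (fun _ => (‖(p t)⁻¹ • A t‖₊ : ENNReal)) := by
            funext ω
            simp only [hf, Set.indicator_apply]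
            split_ifs <;> simp
          rw [h2, lintegral_indicator_const (hmeas t),
            ← ENNReal.ofReal_toReal (hpne t), ← ENNReal.ofReal_coe_nnreal, coe_nnnorm,
            ← ENNReal.ofReal_mul (norm_nonneg _)]
          exact congrArg _ ((mul_comm _ _).trans (hc t))
      _ < ⊤ := by
          rw [← ENNReal.ofReal_tsum_of_nonneg (fun t => norm_nonneg _) hA]
          exact ENNReal.ofReal_lt_top
  · -- Integral value
    calc ∫ ω, (∑ t ∈ Finset.range (X ω + 1), (p t)⁻¹ • A t) ∂μ
        = ∫ ω, (∑' t, f t ω) ∂μ := integral_congr_ae (Filter.Eventually.of_forall hkey)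
      _ = ∑' t, ∫ ω, f t ω ∂μ :=
          (MeasureTheory.integral_tsum_of_summable_integral_norm hint hsum).symm
      _ = ∑' t, A t := tsum_congr hintegral
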